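/- If φ(S_0) ≥ 1 then the attacker can always win: at each turn the attacker presents a partition A, B with φ(A) ≥ 1/2 and φ(B) ≥ 1/2 (which exists by the prefix-partition theorem); whichever set the defender destroys, the surviving set, after advancing one level, has potential 2·φ(surviving set) ≥ 1, so the invariant φ(S) ≥ 1 is maintained; moreover, since the minimum level of surviving pieces never decreases and pieces advance, eventually some piece reaches level K. -/

import Mathlib

open Finset

/-- Potential of a state `S` (counts of pieces per level) in a game with `K` levels. -/
noncomputable def phi (K : ℕ) (S : ℕ → ℕ) : ℝ :=
  ∑ i ∈ Finset.range (K+1), (S i : ℝ) * (2:ℝ) ^ (-((K:ℤ) - i))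

/-- Advance every piece one level. -/
def advance (S : ℕ → ℕ) : ℕ → ℕ := fun i => if i = 0 then 0 else S (i-1)

/-- The attacker can force a win from state `S`: either a piece is already at level `K`,
or the attacker can present a partition `A, B` such that whichever part the defender
destroys, the attacker wins from the advanced surviving part. -/
inductive AttackerWins (K : ℕ) : (ℕ → ℕ) → Prop where
  | reach (S : ℕ → ℕ) : S K ≠ 0 → AttackerWins K S
  | step (S A B : ℕ → ℕ) : (∀ i, A i + B i = S i) →
      AttackerWins K (advance A) → AttackerWins K (advance B) → AttackerWins K S

/-- The defender can force a win from state `S`: either no pieces remain, or no piece is at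
level `K` and for every partition `A, B` the attacker presents, the defender can destroy one
part so that the defender wins from the advanced other part. -/
inductive DefenderWins (K : ℕ) : (ℕ → ℕ) → Prop where
  | empty (S : ℕ → ℕ) : (∀ i, S i = 0) → DefenderWins K S
  | step (S : ℕ → ℕ) (choice : (ℕ → ℕ) → (ℕ → ℕ) → Bool) : S K = 0 →
      (∀ A B : ℕ → ℕ, (∀ i, A i + B i = S i) →
        DefenderWins K (advance (if choice A B then A else B))) → DefenderWins K S

/-! ### Auxiliary development -/

/-- Integer weight: `2^K * phi`. -/
def wgt (K : ℕ) (S : ℕ → ℕ) : ℕ := ∑ i ∈ Finset.range (K+1), S i * 2 ^ i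

/-- Termination measure. -/
def emeas (K : ℕ) (S : ℕ → ℕ) : ℕ := ∑ i ∈ Finset.range (K+1), S i * (K - i)

/-- Greedy prefix pick: choose pieces from high levels downward to hit target `T`. -/
def pick (c : ℕ → ℕ) : ℕ → ℕ → ℕ → ℕ
  | 0, _, _ => 0
  | (L+1), T, i =>
      if i = L then min (c L) (T / 2^L)
      else pick c L (T - min (c L) (T / 2^L) * 2^L) i

lemma pick_spec (c : ℕ → ℕ) :
    ∀ L T, 2^(L-1) ∣ T → T ≤ ∑ i ∈ Finset.range L, c i * 2^i →
      (∀ i, pick c L T i ≤ c i) ∧ (∀ i, L ≤ i → pick c L T i = 0) ∧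
        ∑ i ∈ Finset.range L, pick c L T i * 2^i = T := by
  intro L
  induction L with
  | zero =>
      intro T _ hT
      simp only [Finset.range_zero, Finset.sum_empty, Nat.le_zero] at hT
      subst hT
      refine ⟨fun i => by simp [pick], fun i _ => by simp [pick], by simp⟩
  | succ L ih =>
      intro T hdvd hT
      simp only [Nat.succ_sub_one] at hdvd
      set a := min (c L) (T / 2^L) with ha
      have hale : a * 2^L ≤ T := by
        calc a * 2^L ≤ (T / 2^L) * 2^L := by
              exact Nat.mul_le_mul_right _ (min_le_right _ _)
          _ ≤ T := Nat.div_mul_le_self _ _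
      set T' := T - a * 2^L with hT'
      have hdvd' : 2^(L-1) ∣ T' := by
        have h1 : (2:ℕ)^(L-1) ∣ 2^L := pow_dvd_pow 2 (Nat.sub_le _ _)
        exact Nat.dvd_sub (h1.trans hdvd) (Dvd.dvd.mul_left h1 a)
      have hT'le : T' ≤ ∑ i ∈ Finset.range L, c i * 2^i := by
        rcases le_or_gt (c L) (T / 2^L) with hcase | hcase
        · have haeq : a = c L := min_eq_left hcase
          rw [hT', haeq]
          have := Finset.sum_range_succ (fun i => c i * 2^i) L
          omega
        · have haeq : a = T / 2^L := min_eq_right hcase.le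
          have : a * 2^L = T := by rw [haeq]; exact Nat.div_mul_cancel hdvd
          omega
      obtain ⟨h1, h2, h3⟩ := ih T' hdvd' hT'le
      refine ⟨?_, ?_, ?_⟩
      · intro i
        by_cases hi : i = L
        · subst hi; simp only [pick, if_true]; exact min_le_left _ _
        · simp only [pick, if_neg hi]; exact h1 i
      · intro i hi
        have hne : i ≠ L := by omega
        simp only [pick, if_neg hne]
        exact h2 i (by omega)
      · have heq : ∀ i ∈ Finset.range L, pick c (L+1) T i * 2^i
            = pick c L T' i * 2^i := by
          intro i hi
          have : i ≠ L := by simp at hi; omega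
          simp only [pick, if_neg this]
          rfl
        have hpickL : pick c (L+1) T L = a := by simp [pick]; rfl
        rw [Finset.sum_range_succ, Finset.sum_congr rfl heq, h3, hpickL]
        omega

lemma wgt_add (K : ℕ) {A B S : ℕ → ℕ} (h : ∀ i, A i + B i = S i) :
    wgt K A + wgt K B = wgt K S := by
  unfold wgt
  rw [← Finset.sum_add_distrib]
  exact Finset.sum_congr rfl fun i _ => by rw [← add_mul, h i]

lemma wgt_advance (K : ℕ) {A : ℕ → ℕ} (hK : A K = 0) :
    wgt K (advance A) = 2 * wgt K A := by
  unfold wgt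
  have h0 : advance A 0 = 0 := rfl
  have hs : ∀ k, advance A (k+1) = A k := fun k => rfl
  rw [Finset.sum_range_succ' (fun j => advance A j * 2^j) K,
    Finset.sum_range_succ (fun i => A i * 2^i) K, hK, h0]
  simp only [hs]
  rw [Nat.zero_mul, Nat.zero_mul, Nat.add_zero, Nat.add_zero, Finset.mul_sum]
  exact Finset.sum_congr rfl fun i _ => by ring

lemma emeas_advance_lt (K : ℕ) {A S : ℕ → ℕ} (hle : ∀ i, A i ≤ S i)
    (hne : ∃ i, i < K ∧ A i ≠ 0) :
    emeas K (advance A) < emeas K S := by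
  have h1 : emeas K (advance A) = ∑ i ∈ Finset.range K, A i * (K - (i+1)) := by
    unfold emeas
    have h0 : advance A 0 = 0 := rfl
    have hs : ∀ k, advance A (k+1) = A k := fun k => rfl
    rw [Finset.sum_range_succ' (fun j => advance A j * (K - j)) K, h0]
    simp only [hs]
    rw [Nat.zero_mul, Nat.add_zero]
  have h2 : emeas K (advance A) + ∑ i ∈ Finset.range K, A i
      ≤ ∑ i ∈ Finset.range K, A i * (K - i) := by
    rw [h1, ← Finset.sum_add_distrib]
    apply Finset.sum_le_sum
    intro i hi
    simp only [Finset.mem_range] at hi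
    have h : K - (i+1) + 1 = K - i := by omega
    apply le_of_eq
    calc A i * (K - (i+1)) + A i = A i * (K - (i+1) + 1) := by ring
      _ = A i * (K - i) := by rw [h]
  have h3 : ∑ i ∈ Finset.range K, A i * (K - i) ≤ emeas K S := by
    unfold emeas
    rw [Finset.sum_range_succ]
    have : ∑ i ∈ Finset.range K, A i * (K - i) ≤ ∑ i ∈ Finset.range K, S i * (K - i) :=
      Finset.sum_le_sum fun i _ => Nat.mul_le_mul_right _ (hle i)
    omega
  have h4 : 1 ≤ ∑ i ∈ Finset.range K, A i := by
    obtain ⟨i, hi, hAi⟩ := hne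
    calc 1 ≤ A i := Nat.one_le_iff_ne_zero.mpr hAi
      _ ≤ ∑ j ∈ Finset.range K, A j :=
        Finset.single_le_sum (fun j _ => Nat.zero_le _) (Finset.mem_range.mpr hi)
  omega

lemma exists_low (K : ℕ) {B : ℕ → ℕ} (hK : B K = 0) (hw : wgt K B ≠ 0) :
    ∃ i, i < K ∧ B i ≠ 0 := by
  by_contra hcon
  push_neg at hcon
  apply hw
  unfold wgt
  apply Finset.sum_eq_zero
  intro i hi
  simp only [Finset.mem_range] at hi
  rcases lt_or_eq_of_le (Nat.lt_succ_iff.mp hi) with h | h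
  · rw [hcon i h, Nat.zero_mul]
  · rw [h, hK, Nat.zero_mul]

lemma aux_win (K : ℕ) : ∀ n : ℕ, ∀ S : ℕ → ℕ, emeas K S ≤ n →
    (∀ i, K < i → S i = 0) → 2^K ≤ wgt K S → AttackerWins K S := by
  intro n
  induction n with
  | zero =>
      intro S hm hsupp hw
      by_cases hSK : S K = 0
      · exfalso
        have hlow : ∀ i, i < K → S i = 0 := by
          intro i hi
          by_contra hne
          have : 1 ≤ S i * (K - i) := by
            have : 1 ≤ K - i := by omega
            have h1 : 1 ≤ S i := Nat.one_le_iff_ne_zero.mpr hne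
            calc 1 = 1 * 1 := by ring
              _ ≤ S i * (K - i) := Nat.mul_le_mul h1 this
          have : 1 ≤ emeas K S := le_trans this
            (Finset.single_le_sum (f := fun j => S j * (K - j))
              (fun j _ => Nat.zero_le _) (Finset.mem_range.mpr (by omega)))
          omega
        have : wgt K S = 0 := by
          unfold wgt
          apply Finset.sum_eq_zero
          intro i hi
          simp only [Finset.mem_range] at hi
          rcases lt_or_eq_of_le (Nat.lt_succ_iff.mp hi) with h | h
          · rw [hlow i h, Nat.zero_mul]
          · rw [h, hSK, Nat.zero_mul]
        have hpos : 0 < 2^K := Nat.pow_pos (by omega)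
        omega
      · exact AttackerWins.reach S hSK
  | succ n ih =>
      intro S hm hsupp hw
      by_cases hSK : S K = 0
      · -- split
        have hKpos : 1 ≤ K := by
          by_contra hK0
          have : K = 0 := by omega
          subst this
          simp [wgt, hSK] at hw
        have hwK : 2^(K-1) ≤ ∑ i ∈ Finset.range K, S i * 2^i := by
          have : wgt K S = ∑ i ∈ Finset.range K, S i * 2^i := by
            unfold wgt; rw [Finset.sum_range_succ, hSK, Nat.zero_mul, Nat.add_zero]
          have hle : (2:ℕ)^(K-1) ≤ 2^K := Nat.pow_le_pow_right (by omega) (by omega)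
          omega
        obtain ⟨h1, h2, h3⟩ := pick_spec S K (2^(K-1)) (dvd_refl _) hwK
        set A := pick S K (2^(K-1)) with hA
        set B := fun i => S i - A i with hB
        have hpart : ∀ i, A i + B i = S i := fun i => by
          have := h1 i; simp only [hB]; omega
        have hAK : A K = 0 := h2 K (le_refl _)
        have hBK : B K = 0 := by simp only [hB]; omega
        have hwA : wgt K A = 2^(K-1) := by
          unfold wgt
          rw [Finset.sum_range_succ, hAK, Nat.zero_mul, Nat.add_zero, h3]
        have hwB : 2^(K-1) ≤ wgt K B := by
          have := wgt_add K hpart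
          have hle : (2:ℕ)^(K-1) + 2^(K-1) ≤ 2^K := by
            have : (2:ℕ)^(K-1) * 2 = 2^K := by
              rw [← pow_succ]
              congr 1
              omega
            omega
          omega
        have hsuppA : ∀ i, K < i → A i = 0 := fun i hi => h2 i (by omega)
        have hsuppB : ∀ i, K < i → B i = 0 := fun i hi => by
          simp only [hB]; rw [hsupp i hi]; omega
        have hsadv : ∀ (C : ℕ → ℕ), C K = 0 → (∀ i, K < i → C i = 0) →
            (∀ i, K < i → advance C i = 0) := by
          intro C hCK hsC i hi
          simp only [advance]
          rw [if_neg (by omega)]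
          rcases Nat.lt_or_ge K (i-1) with h | h
          · exact hsC _ h
          · have : i - 1 = K := by omega
            rw [this, hCK]
        have hAlow : ∃ i, i < K ∧ A i ≠ 0 := by
          apply exists_low K hAK
          rw [hwA]
          exact (Nat.pow_pos (by omega)).ne'
        have hBlow : ∃ i, i < K ∧ B i ≠ 0 := by
          apply exists_low K hBK
          have : 0 < 2^(K-1) := Nat.pow_pos (by omega)
          omega
        have hAleS : ∀ i, A i ≤ S i := h1
        have hBleS : ∀ i, B i ≤ S i := fun i => by simp only [hB]; omega
        have hwadvA : 2^K ≤ wgt K (advance A) := by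
          rw [wgt_advance K hAK, hwA, ← pow_succ']
          have : K - 1 + 1 = K := by omega
          rw [this]
        have hwadvB : 2^K ≤ wgt K (advance B) := by
          rw [wgt_advance K hBK]
          have h2K : (2:ℕ)^(K-1) * 2 = 2^K := by
            rw [← pow_succ]; congr 1; omega
          calc (2:ℕ)^K = 2 * 2^(K-1) := by omega
            _ ≤ 2 * wgt K B := Nat.mul_le_mul_left _ hwB
        have hmA : emeas K (advance A) ≤ n := by
          have := emeas_advance_lt K hAleS hAlow
          omega
        have hmB : emeas K (advance B) ≤ n := by
          have := emeas_advance_lt K hBleS hBlow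
          omega
        exact AttackerWins.step S A B hpart
          (ih _ hmA (hsadv A hAK hsuppA) hwadvA)
          (ih _ hmB (hsadv B hBK hsuppB) hwadvB)
      · exact AttackerWins.reach S hSK

lemma phi_eq_wgt (K : ℕ) (S : ℕ → ℕ) : phi K S = (wgt K S : ℝ) / 2^K := by
  unfold phi wgt
  rw [Nat.cast_sum, Finset.sum_div]
  apply Finset.sum_congr rfl
  intro i hi
  simp only [Finset.mem_range] at hi
  have h1 : (-((K:ℤ) - i)) = (i:ℤ) - K := by ring
  rw [h1, zpow_sub₀ (two_ne_zero), zpow_natCast, zpow_natCast]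
  push_cast
  ring

/-- If the initial potential is at least 1, the attacker can always win. -/
theorem stmt8 (K : ℕ) (S : ℕ → ℕ) (hsupp : ∀ i, K < i → S i = 0)
    (h : 1 ≤ phi K S) : AttackerWins K S := by
  have hw : 2^K ≤ wgt K S := by
    rw [phi_eq_wgt] at h
    have hpos : (0:ℝ) < 2^K := by positivity
    rw [le_div_iff₀ hpos, one_mul] at h
    exact_mod_cast h
  exact aux_win K (emeas K S) S (le_refl _) hsupp hw
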